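/- arXiv:0807.2824 — 7 statements merged into one kernel-verified Lean document; each statement's English description precedes it below -/
import Mathlib

section
/- Let I be a finite type and A : I → I → ℤ a symmetric matrix with A i i = 2 for all i, A i j ∈ {0, −1} for all i ≠ j, and such that A is positive definite as a real matrix (for every nonzero y : I → ℝ one has ∑_{i,i'} y i · y i' · A i i' > 0). Let π : I → J be a surjective map onto a finite type J such that A i j = 0 whenever i ≠ j and π i = π j. Define B : J → J → ℤ by B η η = 2 · #(π⁻¹{η}) and, for η ≠ η', B η η' = −#{(i,j) ∈ π⁻¹{η} × π⁻¹{η'} : A i j ≠ 0}. Then B is positive definite: for every x : J → ℝ that is not identically zero, ∑_{η,η'} x η · x η' · B η η' > 0. -/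
lemma folded_entry {I J : Type*} [Fintype I] [Fintype J]
    [DecidableEq I] [DecidableEq J]
    (A : I → I → ℤ)
    (hdiag : ∀ i, A i i = 2)
    (hoff : ∀ i j, i ≠ j → A i j = 0 ∨ A i j = -1)
    (π : I → J)
    (hfib : ∀ i j, i ≠ j → π i = π j → A i j = 0)
    (B : J → J → ℤ)
    (hBdiag : ∀ η, B η η = 2 * (Finset.univ.filter (fun i => π i = η)).card)
    (hBoff : ∀ η η', η ≠ η' →
      B η η' = -((Finset.univ.filter
        (fun p : I × I => π p.1 = η ∧ π p.2 = η' ∧ A p.1 p.2 ≠ 0)).card))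
    (η η' : J) :
    ∑ i ∈ Finset.univ.filter (fun i => π i = η),
      ∑ j ∈ Finset.univ.filter (fun j => π j = η'), A i j = B η η' := by
  by_cases h : η = η'
  · subst h
    rw [hBdiag]
    have : ∀ i ∈ Finset.univ.filter (fun i => π i = η),
        ∑ j ∈ Finset.univ.filter (fun j => π j = η), A i j = 2 := by
      intro i hi
      simp only [Finset.mem_filter] at hi
      rw [Finset.sum_eq_single i]
      · exact hdiag i
      · intro j hj hji
        simp only [Finset.mem_filter] at hj
        exact hfib i j (Ne.symm hji) (hi.2.trans hj.2.symm)
      · intro hni; exact absurd (Finset.mem_filter.mpr ⟨Finset.mem_univ i, hi.2⟩) hni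
    rw [Finset.sum_congr rfl this, Finset.sum_const, nsmul_eq_mul, mul_comm]
  · rw [hBoff η η' h, ← Finset.sum_product']
    rw [← Finset.sum_filter_add_sum_filter_not _ (fun p : I × I => A p.1 p.2 ≠ 0)]
    have h2 : ∑ p ∈ ((Finset.univ.filter (fun i => π i = η)) ×ˢ
        (Finset.univ.filter (fun j => π j = η'))).filter
        (fun p : I × I => ¬ A p.1 p.2 ≠ 0), A p.1 p.2 = 0 := by
      apply Finset.sum_eq_zero
      intro p hp
      simp only [Finset.mem_filter, not_not] at hp
      exact hp.2
    have h1 : ∑ p ∈ ((Finset.univ.filter (fun i => π i = η)) ×ˢ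
        (Finset.univ.filter (fun j => π j = η'))).filter
        (fun p : I × I => A p.1 p.2 ≠ 0), A p.1 p.2
        = -(((Finset.univ.filter (fun i => π i = η)) ×ˢ
        (Finset.univ.filter (fun j => π j = η'))).filter
        (fun p : I × I => A p.1 p.2 ≠ 0)).card := by
      rw [Finset.sum_congr rfl (fun p hp => show A p.1 p.2 = -1 from ?_),
        Finset.sum_const, nsmul_eq_mul, mul_neg_one]
      · simp only [Finset.mem_filter, Finset.mem_product] at hp
        have hne : p.1 ≠ p.2 := fun hpe =>
          h (hp.1.1.2.symm.trans (by rw [hpe]; exact hp.1.2.2))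
        rcases hoff p.1 p.2 hne with h0 | h0
        · exact absurd h0 hp.2
        · exact h0
    rw [h1, h2, add_zero]
    congr 2
    apply Finset.card_bij (fun p _ => p)
    · intro p hp
      simp only [Finset.mem_filter, Finset.mem_product, Finset.mem_univ, true_and] at hp ⊢
      exact ⟨hp.1.1, hp.1.2, hp.2⟩
    · intro p _ q _ h; exact h
    · intro p hp
      simp only [Finset.mem_filter, Finset.mem_product, Finset.mem_univ, true_and] at hp ⊢
      exact ⟨p, ⟨⟨hp.1, hp.2.1⟩, hp.2.2⟩, rfl⟩

/-- Positive definiteness of the folded pairing (Lusztig 1.5, δ = 1 case). -/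
theorem folded_pairing_posDef {I J : Type*} [Fintype I] [Fintype J]
    [DecidableEq I] [DecidableEq J]
    (A : I → I → ℤ)
    (hsymm : ∀ i j, A i j = A j i)
    (hdiag : ∀ i, A i i = 2)
    (hoff : ∀ i j, i ≠ j → A i j = 0 ∨ A i j = -1)
    (hpos : ∀ y : I → ℝ, y ≠ 0 → 0 < ∑ i, ∑ i', y i * y i' * (A i i' : ℝ))
    (π : I → J) (hπ : Function.Surjective π)
    (hfib : ∀ i j, i ≠ j → π i = π j → A i j = 0)
    (B : J → J → ℤ)
    (hBdiag : ∀ η, B η η = 2 * (Finset.univ.filter (fun i => π i = η)).card)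
    (hBoff : ∀ η η', η ≠ η' →
      B η η' = -((Finset.univ.filter
        (fun p : I × I => π p.1 = η ∧ π p.2 = η' ∧ A p.1 p.2 ≠ 0)).card)) :
    ∀ x : J → ℝ, x ≠ 0 → 0 < ∑ η, ∑ η', x η * x η' * (B η η' : ℝ) := by
  intro x hx
  set y : I → ℝ := fun i => x (π i) with hy
  have hy0 : y ≠ 0 := by
    intro h0
    apply hx
    funext η
    obtain ⟨i, rfl⟩ := hπ η
    have := congrFun h0 i
    simpa [hy] using this
  have step : ∀ (f : I → I → ℝ),
      ∑ η, ∑ η', ∑ i ∈ Finset.univ.filter (fun i => π i = η),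
        ∑ j ∈ Finset.univ.filter (fun j => π j = η'), f i j = ∑ i, ∑ j, f i j := by
    intro f
    have h1 : ∀ i : I, ∑ η' : J, ∑ j ∈ Finset.univ.filter (fun j => π j = η'), f i j
        = ∑ j, f i j := fun i => Finset.sum_fiberwise _ _ _
    calc ∑ η, ∑ η', ∑ i ∈ Finset.univ.filter (fun i => π i = η),
          ∑ j ∈ Finset.univ.filter (fun j => π j = η'), f i j
        = ∑ η, ∑ i ∈ Finset.univ.filter (fun i => π i = η),
            ∑ η', ∑ j ∈ Finset.univ.filter (fun j => π j = η'), f i j :=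
          Finset.sum_congr rfl fun η _ => Finset.sum_comm
      _ = ∑ η, ∑ i ∈ Finset.univ.filter (fun i => π i = η), ∑ j, f i j :=
          Finset.sum_congr rfl fun η _ => Finset.sum_congr rfl fun i _ => h1 i
      _ = ∑ i, ∑ j, f i j := Finset.sum_fiberwise _ _ _
  have key : ∑ i, ∑ i', y i * y i' * (A i i' : ℝ)
      = ∑ η, ∑ η', x η * x η' * (B η η' : ℝ) := by
    rw [← step (fun i j => y i * y j * (A i j : ℝ))]
    apply Finset.sum_congr rfl
    intro η _
    apply Finset.sum_congr rfl
    intro η' _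
    rw [← folded_entry A hdiag hoff π hfib B hBdiag hBoff η η']
    push_cast
    rw [Finset.mul_sum]
    apply Finset.sum_congr rfl
    intro i hi
    rw [Finset.mul_sum]
    apply Finset.sum_congr rfl
    intro j hj
    simp only [Finset.mem_filter] at hi hj
    simp only [hy, hi.2, hj.2]
  rw [← key]
  exact hpos y hy0
end

section
/- Fix n ≥ 1. Let I = {1,…,2n}, let A i j = 2 if i = j, A i j = −1 if |i−j| = 1, and A i j = 0 otherwise, and let σ i = 2n+1−i. For k ∈ {1,…,n} let η_k = {k, 2n+1−k} (these are the orbits of σ on I), let δ_k = 2 if there exist i ≠ j in η_k with A i j ≠ 0 and δ_k = 1 otherwise, and let δ = max_k δ_k. Then: δ_n = 2, δ_k = 1 for k < n, and δ = 2; moreover the rational numbers B k k = 2 δ⁻¹ δ_k |η_k| and, for k ≠ l, B k l = −δ⁻¹ δ_k δ_l · #{(i,j) ∈ η_k × η_l : A i j ≠ 0} satisfy: B k k = 2 for k < n, B n n = 4, B k (k+1) = B (k+1) k = −1 for k ≤ n−2, B (n−1) n = B n (n−1) = −2 (when n ≥ 2), and B k l = 0 whenever |k−l| ≥ 2. -/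
/-- folding type `A_{2n}` along the involution `σ i = 2n+1-i`
(Lusztig 1.2 together with 1.5) yields the Cartan datum of 1.4.  The elements
of `I = {1,…,2n}` are encoded as the natural numbers `1,…,2n`; the orbits are
`η k = {k, 2n+1-k}` for `k ∈ {1,…,n}`. -/
theorem folding_A2n (n : ℕ) (hn : 1 ≤ n)
    (A : ℕ → ℕ → ℤ)
    (hA : ∀ i j, A i j = if i = j then 2 else if i + 1 = j ∨ j + 1 = i then -1 else 0)
    (σ : ℕ → ℕ) (hσ : ∀ i, σ i = 2 * n + 1 - i)
    (η : ℕ → Finset ℕ) (hη : ∀ k, η k = {k, σ k})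
    (δ : ℕ → ℕ)
    (hδ : ∀ k, δ k = if ∃ i ∈ η k, ∃ j ∈ η k, i ≠ j ∧ A i j ≠ 0 then 2 else 1)
    (Δ : ℕ) (hΔ : Δ = (Finset.Icc 1 n).sup δ)
    (B : ℕ → ℕ → ℚ)
    (hBdiag : ∀ k, B k k = 2 * (Δ : ℚ)⁻¹ * (δ k : ℚ) * ((η k).card : ℚ))
    (hBoff : ∀ k l, k ≠ l → B k l =
      -((Δ : ℚ)⁻¹ * (δ k : ℚ) * (δ l : ℚ) *
        ((((η k) ×ˢ (η l)).filter (fun p => A p.1 p.2 ≠ 0)).card : ℚ))) :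
    δ n = 2 ∧
    (∀ k, 1 ≤ k → k < n → δ k = 1) ∧
    Δ = 2 ∧
    (∀ k, 1 ≤ k → k < n → B k k = 2) ∧
    B n n = 4 ∧
    (∀ k, 1 ≤ k → k + 2 ≤ n → B k (k + 1) = -1 ∧ B (k + 1) k = -1) ∧
    (2 ≤ n → B (n - 1) n = -2 ∧ B n (n - 1) = -2) ∧
    (∀ k l, 1 ≤ k → k ≤ n → 1 ≤ l → l ≤ n → (k + 2 ≤ l ∨ l + 2 ≤ k) → B k l = 0) := by
  have hA' : ∀ i j : ℕ, A i j ≠ 0 ↔ (i = j ∨ i + 1 = j ∨ j + 1 = i) := by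
    intro i j
    rw [hA]
    split_ifs with h1 h2
    · simp; tauto
    · simp; tauto
    · simp; tauto
  have hσn : σ n = n + 1 := by rw [hσ]; omega
  have hδn : δ n = 2 := by
    rw [hδ, if_pos]
    refine ⟨n, by simp [hη], n + 1, by simp [hη, hσn], by omega, ?_⟩
    exact (hA' n (n + 1)).mpr (Or.inr (Or.inl rfl))
  have hδlt : ∀ k, 1 ≤ k → k < n → δ k = 1 := by
    intro k h1 h2
    rw [hδ, if_neg]
    rintro ⟨i, hi, j, hj, hij, hAij⟩
    rw [hA' i j] at hAij
    simp [hη, hσ] at hi hj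
    omega
  have hδle : ∀ k, δ k ≤ 2 := by
    intro k; rw [hδ]; split_ifs <;> omega
  have hΔ2 : Δ = 2 := by
    rw [hΔ]
    apply le_antisymm
    · exact Finset.sup_le fun k _ => hδle k
    · calc 2 = δ n := hδn.symm
        _ ≤ _ := Finset.le_sup (Finset.mem_Icc.mpr ⟨hn, le_refl n⟩)
  have hcard : ∀ k, 1 ≤ k → k ≤ n → (η k).card = 2 := by
    intro k h1 h2
    rw [hη, hσ]
    rw [Finset.card_insert_of_notMem (by simp; omega)]
    simp
  have hfilter : ∀ k l, 1 ≤ k → k ≤ n → 1 ≤ l → l ≤ n → k ≠ l →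
      (((η k) ×ˢ (η l)).filter (fun p => A p.1 p.2 ≠ 0)).card =
        if k + 1 = l ∨ l + 1 = k then 2 else 0 := by
    intro k l hk1 hkn hl1 hln hkl
    by_cases hadj : k + 1 = l ∨ l + 1 = k
    · rw [if_pos hadj]
      have hset : (((η k) ×ˢ (η l)).filter (fun p => A p.1 p.2 ≠ 0)) =
          {(k, l), (σ k, σ l)} := by
        ext ⟨x, y⟩
        simp only [Finset.mem_filter, Finset.mem_product, hη, hσ, hA',
          Finset.mem_insert, Finset.mem_singleton, Prod.mk.injEq]
        omega
      rw [hset, Finset.card_insert_of_notMem (by simp [hσ, Prod.ext_iff]; omega),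
        Finset.card_singleton]
    · rw [if_neg hadj, Finset.card_eq_zero.mpr]
      rw [Finset.eq_empty_iff_forall_notMem]
      rintro ⟨x, y⟩ hmem
      simp only [Finset.mem_filter, Finset.mem_product, hη, hσ, hA',
        Finset.mem_insert, Finset.mem_singleton] at hmem
      omega
  refine ⟨hδn, hδlt, hΔ2, ?_, ?_, ?_, ?_, ?_⟩
  · intro k h1 h2
    rw [hBdiag, hΔ2, hδlt k h1 h2, hcard k h1 (le_of_lt h2)]
    norm_num
  · rw [hBdiag, hΔ2, hδn, hcard n hn le_rfl]
    norm_num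
  · intro k h1 h2
    constructor
    · rw [hBoff k (k + 1) (by omega), hΔ2, hδlt k h1 (by omega),
        hδlt (k + 1) (by omega) (by omega),
        hfilter k (k + 1) h1 (by omega) (by omega) (by omega) (by omega),
        if_pos (Or.inl rfl)]
      norm_num
    · rw [hBoff (k + 1) k (by omega), hΔ2, hδlt k h1 (by omega),
        hδlt (k + 1) (by omega) (by omega),
        hfilter (k + 1) k (by omega) (by omega) h1 (by omega) (by omega),
        if_pos (Or.inr rfl)]
      norm_num
  · intro h2
    constructor
    · rw [hBoff (n - 1) n (by omega), hΔ2, hδlt (n - 1) (by omega) (by omega), hδn,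
        hfilter (n - 1) n (by omega) (by omega) hn le_rfl (by omega),
        if_pos (by omega)]
      norm_num
    · rw [hBoff n (n - 1) (by omega), hΔ2, hδlt (n - 1) (by omega) (by omega), hδn,
        hfilter n (n - 1) hn le_rfl (by omega) (by omega) (by omega),
        if_pos (by omega)]
      norm_num
  · intro k l hk1 hkn hl1 hln hfar
    rw [hBoff k l (by omega), hfilter k l hk1 hkn hl1 hln (by omega),
      if_neg (by omega)]
    norm_num
end

section
/- For positive real numbers d, c, b, a, let α = ab + ad + cd and ε = ab² + ad² + cd² + 2abd, and define F : (ℝ_{>0})⁴ → (ℝ_{>0})⁴ by F(d,c,b,a) = (ab²c/ε, ε/α, α²/ε, bcd/α). Let rev(x₁,x₂,x₃,x₄) = (x₄,x₃,x₂,x₁). Then F maps (ℝ_{>0})⁴ into (ℝ_{>0})⁴ and for all positive reals d, c, b, a one has F(rev(F(d,c,b,a))) = (a,b,c,d); equivalently, rev ∘ F is an involution of (ℝ_{>0})⁴. -/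
set_option maxHeartbeats 2000000

/-- Lusztig's type B₂ transition map of 1.9(iii):
`F (d, c, b, a) = (ab²c/ε, ε/α, α²/ε, bcd/α)` where `α = ab + ad + cd` and
`ε = ab² + ad² + cd² + 2abd`. -/
noncomputable def lusztigB2F : ℝ × ℝ × ℝ × ℝ → ℝ × ℝ × ℝ × ℝ :=
  fun (d, c, b, a) =>
    (a * b ^ 2 * c / (a * b ^ 2 + a * d ^ 2 + c * d ^ 2 + 2 * a * b * d),
     (a * b ^ 2 + a * d ^ 2 + c * d ^ 2 + 2 * a * b * d) / (a * b + a * d + c * d),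
     (a * b + a * d + c * d) ^ 2 / (a * b ^ 2 + a * d ^ 2 + c * d ^ 2 + 2 * a * b * d),
     b * c * d / (a * b + a * d + c * d))

/-- Reversal of a quadruple. -/
def rev4R : ℝ × ℝ × ℝ × ℝ → ℝ × ℝ × ℝ × ℝ := fun (x₁, x₂, x₃, x₄) => (x₄, x₃, x₂, x₁)

/-- `F` maps `(ℝ_{>0})⁴` into itself and `rev ∘ F` is an involution
of `(ℝ_{>0})⁴`, i.e. `F (rev (F (d,c,b,a))) = (a,b,c,d)` for positive `d,c,b,a`. -/
theorem lusztigB2F_involution (d c b a : ℝ)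
    (hd : 0 < d) (hc : 0 < c) (hb : 0 < b) (ha : 0 < a) :
    (0 < (lusztigB2F (d, c, b, a)).1 ∧
     0 < (lusztigB2F (d, c, b, a)).2.1 ∧
     0 < (lusztigB2F (d, c, b, a)).2.2.1 ∧
     0 < (lusztigB2F (d, c, b, a)).2.2.2) ∧
    lusztigB2F (rev4R (lusztigB2F (d, c, b, a))) = (a, b, c, d) := by
  have hα : 0 < a * b + a * d + c * d := by positivity
  have hε : 0 < a * b ^ 2 + a * d ^ 2 + c * d ^ 2 + 2 * a * b * d := by positivity
  constructor
  · simp only [lusztigB2F]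
    exact ⟨by positivity, by positivity, by positivity, by positivity⟩
  · simp only [lusztigB2F, rev4R, Prod.mk.injEq]
    refine ⟨?_, ?_, ?_, ?_⟩
    all_goals
      rw [div_eq_iff (by positivity)]
      field_simp
      ring
end

section
/- Define T : ℤ⁴ → ℤ⁴ by T(d,c,b,a) = (d',c',b',a') where d' = a+2b+c − min(a+2b, a+2d, c+2d), c' = min(a+2b, a+2d, c+2d) − min(a+b, a+d, c+d), b' = 2·min(a+b, a+d, c+d) − min(a+2b, a+2d, c+2d), and a' = b+c+d − min(a+b, a+d, c+d). Let rev(x₁,x₂,x₃,x₄) = (x₄,x₃,x₂,x₁). Then for all integers d, c, b, a one has T(rev(T(d,c,b,a))) = (a,b,c,d); equivalently, rev ∘ T is an involution of ℤ⁴. -/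
/-- The tropical form of Lusztig's type B₂ transition map, over the semifield
`(ℤ, min, +)`:  `T (d, c, b, a) = (d', c', b', a')` with
`d' = a + 2b + c - min(a+2b, a+2d, c+2d)`,
`c' = min(a+2b, a+2d, c+2d) - min(a+b, a+d, c+d)`,
`b' = 2 min(a+b, a+d, c+d) - min(a+2b, a+2d, c+2d)`,
`a' = b + c + d - min(a+b, a+d, c+d)`. -/
def tropicalB2T : ℤ × ℤ × ℤ × ℤ → ℤ × ℤ × ℤ × ℤ :=
  fun (d, c, b, a) =>
    (a + 2 * b + c - min (a + 2 * b) (min (a + 2 * d) (c + 2 * d)),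
     min (a + 2 * b) (min (a + 2 * d) (c + 2 * d)) - min (a + b) (min (a + d) (c + d)),
     2 * min (a + b) (min (a + d) (c + d)) - min (a + 2 * b) (min (a + 2 * d) (c + 2 * d)),
     b + c + d - min (a + b) (min (a + d) (c + d)))

/-- Reversal of a quadruple. -/
def rev4Z : ℤ × ℤ × ℤ × ℤ → ℤ × ℤ × ℤ × ℤ := fun (x₁, x₂, x₃, x₄) => (x₄, x₃, x₂, x₁)

/-- `rev ∘ T` is an involution of `ℤ⁴`:
`T (rev (T (d,c,b,a))) = (a,b,c,d)` for all integers `d,c,b,a`. -/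
theorem tropicalB2T_involution (d c b a : ℤ) :
    tropicalB2T (rev4Z (tropicalB2T (d, c, b, a))) = (a, b, c, d) := by
  simp only [tropicalB2T, rev4Z, Prod.mk.injEq]
  refine ⟨?_, ?_, ?_, ?_⟩ <;> omega
end

section
/- Let I₃ = {1, 2, 2̄} with symmetric pairing A given by A i i = 2, A 1 2 = A 2 1 = A 1 2̄ = A 2̄ 1 = −1, and A 2 2̄ = A 2̄ 2 = 0 (type A₃, a path 2 — 1 — 2̄). Then for all positive reals a, b, c, d, setting α = ab + ad + cd and ε = ab² + ad² + cd² + 2abd, the decorated words [(2,d), (2̄,d), (1,c), (2̄,b), (2,b), (1,a)] and [(1, ab²c/ε), (2, ε/α), (2̄, ε/α), (1, α²/ε), (2̄, bcd/α), (2, bcd/α)] are connected by elementary moves. -/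
/-- An elementary move between decorated words (lists of pairs of a letter and a
real coefficient) over a type `I` with pairing `A`: a commutation move when
`A p p' = 0`, or a braid move when `A p p' = -1`. -/
inductive DecoratedMove {I : Type*} (A : I → I → ℤ) :
    List (I × ℝ) → List (I × ℝ) → Prop
  | comm (L₁ L₂ : List (I × ℝ)) (p p' : I) (x y : ℝ) (h : A p p' = 0) :
      DecoratedMove A (L₁ ++ (p, x) :: (p', y) :: L₂) (L₁ ++ (p', y) :: (p, x) :: L₂)
  | braid (L₁ L₂ : List (I × ℝ)) (p p' : I) (x y z : ℝ) (h : A p p' = -1) :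
      DecoratedMove A (L₁ ++ (p, x) :: (p', y) :: (p, z) :: L₂)
        (L₁ ++ (p', y * z / (x + z)) :: (p, x + z) :: (p', x * y / (x + z)) :: L₂)

/-- Two decorated words are connected if one is obtained from the other by a
finite sequence of elementary moves and their inverses. -/
def DecoratedConnected {I : Type*} (A : I → I → ℤ) :
    List (I × ℝ) → List (I × ℝ) → Prop :=
  Relation.EqvGen (DecoratedMove A)

/-- The index set `I₃ = {1, 2, 2̄}` of type A₃ (a path 2 — 1 — 2̄). -/
inductive I3 : Type
  | one : I3
  | two : I3
  | twobar : I3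

/-- The type A₃ pairing on `I₃`. -/
def pairingA3 : I3 → I3 → ℤ
  | .one, .one => 2
  | .two, .two => 2
  | .twobar, .twobar => 2
  | .one, .two => -1
  | .two, .one => -1
  | .one, .twobar => -1
  | .twobar, .one => -1
  | .two, .twobar => 0
  | .twobar, .two => 0

/-- the chain of Lusztig's 1.9(iii): the decorated words
`2^d 2̄^d 1^c 2̄^b 2^b 1^a` and
`1^{ab²c/ε} 2^{ε/α} 2̄^{ε/α} 1^{α²/ε} 2̄^{bcd/α} 2^{bcd/α}` are connected,
where `α = ab + ad + cd` and `ε = ab² + ad² + cd² + 2abd`. -/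
theorem lusztig_1_9_iii_chain (a b c d : ℝ)
    (ha : 0 < a) (hb : 0 < b) (hc : 0 < c) (hd : 0 < d)
    (α ε : ℝ)
    (hα : α = a * b + a * d + c * d)
    (hε : ε = a * b ^ 2 + a * d ^ 2 + c * d ^ 2 + 2 * a * b * d) :
    DecoratedConnected pairingA3
      [(I3.two, d), (I3.twobar, d), (I3.one, c), (I3.twobar, b), (I3.two, b), (I3.one, a)]
      [(I3.one, a * b ^ 2 * c / ε), (I3.two, ε / α), (I3.twobar, ε / α),
       (I3.one, α ^ 2 / ε), (I3.twobar, b * c * d / α), (I3.two, b * c * d / α)] := by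
  have hα0 : 0 < α := by rw [hα]; positivity
  have hε0 : 0 < ε := by rw [hε]; positivity
  set p : ℝ := c * b / (d + b) with hp
  set q : ℝ := d + b with hq
  set r : ℝ := d * c / (d + b) with hr
  have hp0 : 0 < p := by positivity
  have hq0 : 0 < q := by positivity
  have hr0 : 0 < r := by positivity
  set z0 : ℝ := b * a / (r + a) with hz0
  have hz00 : 0 < z0 := by positivity
  set x0 : ℝ := d * p / (d + z0) with hx0
  have hx00 : 0 < x0 := by positivity
  have step1 : DecoratedMove pairingA3
      [(I3.two, d), (I3.twobar, d), (I3.one, c), (I3.twobar, b), (I3.two, b), (I3.one, a)]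
      [(I3.two, d), (I3.one, p), (I3.twobar, q), (I3.one, r), (I3.two, b), (I3.one, a)] :=
    DecoratedMove.braid [(I3.two, d)] [(I3.two, b), (I3.one, a)] I3.twobar I3.one d c b rfl
  have step2 : DecoratedMove pairingA3
      [(I3.two, d), (I3.one, p), (I3.twobar, q), (I3.one, r), (I3.two, b), (I3.one, a)]
      [(I3.two, d), (I3.one, p), (I3.twobar, q), (I3.two, z0), (I3.one, r + a),
        (I3.two, r * b / (r + a))] :=
    DecoratedMove.braid [(I3.two, d), (I3.one, p), (I3.twobar, q)] [] I3.one I3.two r b a rfl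
  have step3 : DecoratedMove pairingA3
      [(I3.two, d), (I3.one, p), (I3.twobar, q), (I3.two, z0), (I3.one, r + a),
        (I3.two, r * b / (r + a))]
      [(I3.two, d), (I3.one, p), (I3.two, z0), (I3.twobar, q), (I3.one, r + a),
        (I3.two, r * b / (r + a))] :=
    DecoratedMove.comm [(I3.two, d), (I3.one, p)]
      [(I3.one, r + a), (I3.two, r * b / (r + a))] I3.twobar I3.two q z0 rfl
  have step4 : DecoratedMove pairingA3
      [(I3.two, d), (I3.one, p), (I3.two, z0), (I3.twobar, q), (I3.one, r + a),
        (I3.two, r * b / (r + a))]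
      [(I3.one, p * z0 / (d + z0)), (I3.two, d + z0), (I3.one, x0), (I3.twobar, q),
        (I3.one, r + a), (I3.two, r * b / (r + a))] :=
    DecoratedMove.braid [] [(I3.twobar, q), (I3.one, r + a), (I3.two, r * b / (r + a))]
      I3.two I3.one d p z0 rfl
  have step5 : DecoratedMove pairingA3
      [(I3.one, p * z0 / (d + z0)), (I3.two, d + z0), (I3.one, x0), (I3.twobar, q),
        (I3.one, r + a), (I3.two, r * b / (r + a))]
      [(I3.one, p * z0 / (d + z0)), (I3.two, d + z0),
        (I3.twobar, q * (r + a) / (x0 + (r + a))), (I3.one, x0 + (r + a)),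
        (I3.twobar, x0 * q / (x0 + (r + a))), (I3.two, r * b / (r + a))] :=
    DecoratedMove.braid [(I3.one, p * z0 / (d + z0)), (I3.two, d + z0)]
      [(I3.two, r * b / (r + a))] I3.one I3.twobar x0 q (r + a) rfl
  have key : [(I3.one, p * z0 / (d + z0)), (I3.two, d + z0),
        (I3.twobar, q * (r + a) / (x0 + (r + a))), (I3.one, x0 + (r + a)),
        (I3.twobar, x0 * q / (x0 + (r + a))), (I3.two, r * b / (r + a))]
      = [(I3.one, a * b ^ 2 * c / ε), (I3.two, ε / α), (I3.twobar, ε / α),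
        (I3.one, α ^ 2 / ε), (I3.twobar, b * c * d / α), (I3.two, b * c * d / α)] := by
    have hdb : d + b ≠ 0 := by positivity
    have hra : r + a ≠ 0 := by positivity
    have hdz : d + z0 ≠ 0 := by positivity
    have hxr : x0 + (r + a) ≠ 0 := by positivity
    have hαn : α ≠ 0 := ne_of_gt hα0
    have hεn : ε ≠ 0 := ne_of_gt hε0
    rw [hx0, hz0, hr, hp, hq, hα, hε] at *
    simp only [List.cons.injEq, Prod.mk.injEq, true_and, and_true]
    refine ⟨?_, ?_, ?_, ?_, ?_, ?_⟩ <;> field_simp <;> ring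
  rw [← key]
  exact .trans _ _ _ (.rel _ _ step1) (.trans _ _ _ (.rel _ _ step2)
    (.trans _ _ _ (.rel _ _ step3) (.trans _ _ _ (.rel _ _ step4) (.rel _ _ step5))))
end

section
/- Let I₃ = {1, 2, 2̄} with symmetric pairing A given by A i i = 2, A 1 2 = A 2 1 = A 1 2̄ = A 2̄ 1 = −1, and A 2 2̄ = A 2̄ 2 = 0 (type A₃, a path 2 — 1 — 2̄). Then for all integers a, b, c, d, setting α* = min(a+b, a+d, c+d) and ε* = min(a+2b, a+2d, c+2d), the tropically decorated words [(2,d), (2̄,d), (1,c), (2̄,b), (2,b), (1,a)] and [(1, a+2b+c−ε*), (2, ε*−α*), (2̄, ε*−α*), (1, 2α*−ε*), (2̄, b+c+d−α*), (2, b+c+d−α*)] are connected by tropical elementary moves. -/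
/-- A tropical elementary move between tropically decorated words (lists of
pairs of a letter and an integer coefficient) over a type `I` with pairing `A`:
a commutation move when `A p p' = 0`, or a tropical braid move when
`A p p' = -1`. -/
inductive TropicalMove {I : Type*} (A : I → I → ℤ) :
    List (I × ℤ) → List (I × ℤ) → Prop
  | comm (L₁ L₂ : List (I × ℤ)) (p p' : I) (x y : ℤ) (h : A p p' = 0) :
      TropicalMove A (L₁ ++ (p, x) :: (p', y) :: L₂) (L₁ ++ (p', y) :: (p, x) :: L₂)
  | braid (L₁ L₂ : List (I × ℤ)) (p p' : I) (x y z : ℤ) (h : A p p' = -1) :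
      TropicalMove A (L₁ ++ (p, x) :: (p', y) :: (p, z) :: L₂)
        (L₁ ++ (p', y + z - min x z) :: (p, min x z) :: (p', x + y - min x z) :: L₂)

/-- Two tropically decorated words are connected if one is obtained from the
other by a finite sequence of tropical elementary moves and their inverses. -/
def TropicalConnected {I : Type*} (A : I → I → ℤ) :
    List (I × ℤ) → List (I × ℤ) → Prop :=
  Relation.EqvGen (TropicalMove A)

/-- the tropical form of the chain of Lusztig's 1.9(iii), over
the semifield `(ℤ, min, +)`: with `α* = min(a+b, a+d, c+d)` and
`ε* = min(a+2b, a+2d, c+2d)`, the tropically decorated words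
`2^d 2̄^d 1^c 2̄^b 2^b 1^a` and
`1^{a+2b+c-ε*} 2^{ε*-α*} 2̄^{ε*-α*} 1^{2α*-ε*} 2̄^{b+c+d-α*} 2^{b+c+d-α*}`
are connected. -/
theorem lusztig_1_9_iii_tropical_chain (a b c d : ℤ)
    (αs εs : ℤ)
    (hαs : αs = min (a + b) (min (a + d) (c + d)))
    (hεs : εs = min (a + 2 * b) (min (a + 2 * d) (c + 2 * d))) :
    TropicalConnected pairingA3
      [(I3.two, d), (I3.twobar, d), (I3.one, c), (I3.twobar, b), (I3.two, b), (I3.one, a)]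
      [(I3.one, a + 2 * b + c - εs), (I3.two, εs - αs), (I3.twobar, εs - αs),
       (I3.one, 2 * αs - εs), (I3.twobar, b + c + d - αs), (I3.two, b + c + d - αs)] := by
  set m1 := min d b with hm1
  set m2 := min (d + c - m1) a with hm2
  set m3 := min d (b + a - m2) with hm3
  set m4 := min (d + (c + b - m1) - m3) m2 with hm4
  have s1 : TropicalMove pairingA3
      [(I3.two, d), (I3.twobar, d), (I3.one, c), (I3.twobar, b), (I3.two, b), (I3.one, a)]
      [(I3.two, d), (I3.one, c + b - m1), (I3.twobar, m1), (I3.one, d + c - m1),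
       (I3.two, b), (I3.one, a)] :=
    TropicalMove.braid [(I3.two, d)] [(I3.two, b), (I3.one, a)] I3.twobar I3.one d c b rfl
  have s2 : TropicalMove pairingA3
      [(I3.two, d), (I3.one, c + b - m1), (I3.twobar, m1), (I3.one, d + c - m1),
       (I3.two, b), (I3.one, a)]
      [(I3.two, d), (I3.one, c + b - m1), (I3.twobar, m1), (I3.two, b + a - m2),
       (I3.one, m2), (I3.two, (d + c - m1) + b - m2)] :=
    TropicalMove.braid [(I3.two, d), (I3.one, c + b - m1), (I3.twobar, m1)] []
      I3.one I3.two (d + c - m1) b a rfl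
  have s3 : TropicalMove pairingA3
      [(I3.two, d), (I3.one, c + b - m1), (I3.twobar, m1), (I3.two, b + a - m2),
       (I3.one, m2), (I3.two, (d + c - m1) + b - m2)]
      [(I3.two, d), (I3.one, c + b - m1), (I3.two, b + a - m2), (I3.twobar, m1),
       (I3.one, m2), (I3.two, (d + c - m1) + b - m2)] :=
    TropicalMove.comm [(I3.two, d), (I3.one, c + b - m1)]
      [(I3.one, m2), (I3.two, (d + c - m1) + b - m2)] I3.twobar I3.two m1 (b + a - m2) rfl
  have s4 : TropicalMove pairingA3
      [(I3.two, d), (I3.one, c + b - m1), (I3.two, b + a - m2), (I3.twobar, m1),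
       (I3.one, m2), (I3.two, (d + c - m1) + b - m2)]
      [(I3.one, (c + b - m1) + (b + a - m2) - m3), (I3.two, m3),
       (I3.one, d + (c + b - m1) - m3), (I3.twobar, m1),
       (I3.one, m2), (I3.two, (d + c - m1) + b - m2)] :=
    TropicalMove.braid [] [(I3.twobar, m1), (I3.one, m2), (I3.two, (d + c - m1) + b - m2)]
      I3.two I3.one d (c + b - m1) (b + a - m2) rfl
  have s5 : TropicalMove pairingA3
      [(I3.one, (c + b - m1) + (b + a - m2) - m3), (I3.two, m3),
       (I3.one, d + (c + b - m1) - m3), (I3.twobar, m1),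
       (I3.one, m2), (I3.two, (d + c - m1) + b - m2)]
      [(I3.one, (c + b - m1) + (b + a - m2) - m3), (I3.two, m3),
       (I3.twobar, m1 + m2 - m4), (I3.one, m4),
       (I3.twobar, (d + (c + b - m1) - m3) + m1 - m4),
       (I3.two, (d + c - m1) + b - m2)] :=
    TropicalMove.braid [(I3.one, (c + b - m1) + (b + a - m2) - m3), (I3.two, m3)]
      [(I3.two, (d + c - m1) + b - m2)]
      I3.one I3.twobar (d + (c + b - m1) - m3) m1 m2 rfl
  have hfinal :
      [(I3.one, (c + b - m1) + (b + a - m2) - m3), (I3.two, m3),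
       (I3.twobar, m1 + m2 - m4), (I3.one, m4),
       (I3.twobar, (d + (c + b - m1) - m3) + m1 - m4),
       (I3.two, (d + c - m1) + b - m2)]
      = [(I3.one, a + 2 * b + c - εs), (I3.two, εs - αs), (I3.twobar, εs - αs),
         (I3.one, 2 * αs - εs), (I3.twobar, b + c + d - αs), (I3.two, b + c + d - αs)] := by
    simp only [List.cons.injEq, Prod.mk.injEq, and_true, true_and]
    refine ⟨?_, ?_, ?_, ?_, ?_, ?_⟩ <;> omega
  have hchain4 : TropicalConnected pairingA3
      [(I3.two, d), (I3.twobar, d), (I3.one, c), (I3.twobar, b), (I3.two, b), (I3.one, a)]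
      [(I3.one, (c + b - m1) + (b + a - m2) - m3), (I3.two, m3),
       (I3.twobar, m1 + m2 - m4), (I3.one, m4),
       (I3.twobar, (d + (c + b - m1) - m3) + m1 - m4),
       (I3.two, (d + c - m1) + b - m2)] :=
    ((((Relation.EqvGen.rel _ _ s1).trans _ _ _ (Relation.EqvGen.rel _ _ s2)).trans _ _ _
      (Relation.EqvGen.rel _ _ s3)).trans _ _ _ (Relation.EqvGen.rel _ _ s4)).trans _ _ _
      (Relation.EqvGen.rel _ _ s5)
  exact hfinal ▸ hchain4
end

section
/- Let I be a finite type, A : I → I → ℤ a symmetric matrix, and σ : I ≃ I a bijection with A (σ i) (σ j) = A i j for all i, j. Let η and η' be two orbits of σ acting on I (orbits of the cyclic group generated by σ). Then the number #{j ∈ η' : A i j ≠ 0} is the same for every i ∈ η; consequently the cardinality #η divides #{(i,j) ∈ η × η' : A i j ≠ 0}. -/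
/-- let `A` be a symmetric integer matrix on a finite type `I`,
invariant under a bijection `σ`.  If `η` and `η'` are two orbits of (the cyclic
group generated by) `σ`, then the number `#{j ∈ η' : A i j ≠ 0}` is independent
of `i ∈ η`; consequently `#η` divides `#{(i,j) ∈ η × η' : A i j ≠ 0}`
(Lusztig 1.5, integrality of the folded pairing). -/
theorem orbit_card_dvd_pairs {I : Type*} [Fintype I] [DecidableEq I]
    (A : I → I → ℤ)
    (hsymm : ∀ i j, A i j = A j i)
    (σ : Equiv.Perm I) (hσ : ∀ i j, A (σ i) (σ j) = A i j)
    (η η' : Finset I) (i₀ i₀' : I)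
    (hη : ∀ j, j ∈ η ↔ ∃ k : ℤ, (σ ^ k) i₀ = j)
    (hη' : ∀ j, j ∈ η' ↔ ∃ k : ℤ, (σ ^ k) i₀' = j) :
    (∀ i ∈ η, ∀ i' ∈ η,
      (η'.filter (fun j => A i j ≠ 0)).card = (η'.filter (fun j => A i' j ≠ 0)).card) ∧
    η.card ∣ ((η ×ˢ η').filter (fun p => A p.1 p.2 ≠ 0)).card := by
  classical
  -- σ maps η' into itself
  have hσmem : ∀ j, j ∈ η' → σ j ∈ η' := by
    intro j hj
    rcases (hη' j).1 hj with ⟨k, rfl⟩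
    exact (hη' _).2 ⟨k + 1, by rw [add_comm, zpow_add, zpow_one]; rfl⟩
  have hσmem' : ∀ j, j ∈ η' → σ⁻¹ j ∈ η' := by
    intro j hj
    rcases (hη' j).1 hj with ⟨k, rfl⟩
    exact (hη' _).2 ⟨k - 1, by rw [sub_eq_add_neg, add_comm, zpow_add, zpow_neg, zpow_one]; rfl⟩
  set f : I → ℕ := fun i => (η'.filter (fun j => A i j ≠ 0)).card with hf
  have hstep : ∀ i, f (σ i) = f i := by
    intro i
    apply Finset.card_bij (fun j _ => σ⁻¹ j)
    · intro j hj
      simp only [Finset.mem_filter] at hj ⊢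
      refine ⟨hσmem' j hj.1, ?_⟩
      have := hσ i (σ⁻¹ j)
      rw [show σ (σ⁻¹ j) = j from Equiv.apply_symm_apply σ j] at this
      rw [← this]; exact hj.2
    · intro a ha b hb hab
      exact σ⁻¹.injective hab
    · intro b hb
      simp only [Finset.mem_filter] at hb
      refine ⟨σ b, Finset.mem_filter.2 ⟨hσmem b hb.1, ?_⟩, by simp⟩
      rw [hσ]; exact hb.2
  have hzpow : ∀ k : ℤ, ∀ i, f ((σ ^ k) i) = f i := by
    intro k
    induction k using Int.induction_on with
    | zero => intro i; simp
    | succ n ih =>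
        intro i
        have : ((σ : Equiv.Perm I) ^ ((n : ℤ) + 1)) i = σ ((σ ^ (n : ℤ)) i) := by
          rw [add_comm, zpow_add, zpow_one]; rfl
        rw [this, hstep, ih]
    | pred n ih =>
        intro i
        have : ((σ : Equiv.Perm I) ^ (-(n : ℤ) - 1)) i = σ⁻¹ ((σ ^ (-(n : ℤ))) i) := by
          rw [sub_eq_add_neg, add_comm, zpow_add, zpow_neg, zpow_one]; rfl
        have h2 : f (σ⁻¹ ((σ ^ (-(n : ℤ))) i)) = f ((σ ^ (-(n : ℤ))) i) := by
          conv_rhs => rw [← show σ (σ⁻¹ ((σ ^ (-(n : ℤ))) i)) = (σ ^ (-(n : ℤ))) i from Equiv.apply_symm_apply σ _]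
          rw [hstep]
        rw [this, h2, ih]
  have hconst : ∀ i ∈ η, ∀ i' ∈ η, f i = f i' := by
    intro i hi i' hi'
    rcases (hη i).1 hi with ⟨k, rfl⟩
    rcases (hη i').1 hi' with ⟨k', rfl⟩
    rw [hzpow, hzpow]
  refine ⟨hconst, ?_⟩
  -- count pairs fiberwise over first coordinate
  have hcard : ((η ×ˢ η').filter (fun p => A p.1 p.2 ≠ 0)).card = ∑ i ∈ η, f i := by
    rw [Finset.card_eq_sum_card_fiberwise
      (f := Prod.fst) (t := η)
      (fun p hp => (Finset.mem_product.1 (Finset.mem_filter.1 hp).1).1)]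
    refine Finset.sum_congr rfl fun i hi => ?_
    apply Finset.card_bij (fun p _ => p.2)
    · intro p hp
      simp only [Finset.mem_filter, Finset.mem_product] at hp ⊢
      obtain ⟨⟨⟨_, h2⟩, h3⟩, h4⟩ := hp
      subst h4
      exact ⟨h2, h3⟩
    · intro a ha b hb hab
      simp only [Finset.mem_filter] at ha hb
      have := ha.2; have := hb.2
      ext
      · rw [ha.2, hb.2]
      · exact hab
    · intro b hb
      simp only [Finset.mem_filter] at hb
      exact ⟨(i, b), by simp [Finset.mem_filter, Finset.mem_product, hi, hb.1, hb.2], rfl⟩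
  rw [hcard]
  rcases η.eq_empty_or_nonempty with rfl | ⟨i, hi⟩
  · simp
  · have : ∑ j ∈ η, f j = η.card * f i :=
      Finset.sum_eq_card_nsmul (fun j hj => hconst j hj i hi)
    rw [this]
    exact Dvd.intro _ rfl
end
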